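/- Let V be a finite-dimensional vector space with a nondegenerate reflexive sesquilinear form, let F = (0 = V_0 ≤ ... ≤ V_k = V) be a flag satisfying F^⊥ = F (i.e., V_i^⊥ = V_{k-i} for all i), and let U ≤ V be transversal to F. Then U^⊥ is also transversal to F. -/

import Mathlib

variable {F V : Type*} [Field F] [AddCommGroup V] [Module F V]

/-- The orthogonal complement of a subspace with respect to a sesquilinear form. -/
def sesqPerp {σ : F →+* F} (B : V →ₗ[F] V →ₛₗ[σ] F) (A : Submodule F V) :
    Submodule F V where
  carrier := {v | ∀ a ∈ A, B v a = 0}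
  add_mem' := by
    intro x y hx hy a ha
    simp [map_add, hx a ha, hy a ha]
  zero_mem' := by intro a _; simp
  smul_mem' := by
    intro c x hx a ha
    simp [map_smul, hx a ha]


open Module

section semidual
variable {σ : F →+* F} {M : Type*} [AddCommGroup M] [Module F M]

/-- Evaluation of semilinear functionals on a basis, as linear equiv. -/
noncomputable def semiDualEquiv {ι : Type*} [Fintype ι] [DecidableEq ι] (b : Basis ι F M) :
    (M →ₛₗ[σ] F) ≃ₗ[F] (ι → F) where
  toFun f i := f (b i)
  map_add' f g := rfl
  map_smul' c f := rfl
  invFun c :=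
    { toFun := fun v => ∑ i, σ (b.repr v i) * c i
      map_add' := by
        intro x y
        simp [map_add, Finsupp.add_apply, add_mul, Finset.sum_add_distrib]
      map_smul' := by
        intro a x
        simp [map_smul, Finsupp.smul_apply, smul_eq_mul, mul_assoc, Finset.mul_sum] }
  left_inv f := by
    apply b.ext
    intro i
    simp only [LinearMap.coe_mk, AddHom.coe_mk]
    rw [Finset.sum_eq_single i]
    · simp
    · intro j _ hj
      simp [Basis.repr_self, Finsupp.single_apply, Ne.symm hj]
    · intro h; exact absurd (Finset.mem_univ i) h
  right_inv c := by
    funext i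
    simp only [LinearMap.coe_mk, AddHom.coe_mk]
    rw [Finset.sum_eq_single i]
    · simp
    · intro j _ hj
      simp [Basis.repr_self, Finsupp.single_apply, Ne.symm hj]
    · intro h; exact absurd (Finset.mem_univ i) h

theorem finrank_semilinearDual [FiniteDimensional F M] :
    finrank F (M →ₛₗ[σ] F) = finrank F M := by
  classical
  have e := semiDualEquiv (σ := σ) (Module.finBasis F M)
  rw [e.finrank_eq]
  simp

instance finiteDimensional_semilinearDual [FiniteDimensional F M] :
    FiniteDimensional F (M →ₛₗ[σ] F) := by
  classical
  exact Module.Finite.equiv (semiDualEquiv (σ := σ) (Module.finBasis F M)).symm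

end semidual



variable {σ : F →+* F}

theorem mem_sesqPerp {B : V →ₗ[F] V →ₛₗ[σ] F} {A : Submodule F V} {v : V} :
    v ∈ sesqPerp B A ↔ ∀ a ∈ A, B v a = 0 := Iff.rfl

/-- The submodule of semilinear functionals vanishing on `A`. -/
def vanishOn (A : Submodule F V) : Submodule F (V →ₛₗ[σ] F) where
  carrier := {f | ∀ a ∈ A, f a = 0}
  add_mem' := by intro f g hf hg a ha; simp [hf a ha, hg a ha]
  zero_mem' := by intro a _; simp
  smul_mem' := by intro c f hf a ha; simp [hf a ha]

noncomputable def vanishOnEquiv (A : Submodule F V) :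
    ((V ⧸ A) →ₛₗ[σ] F) ≃ₗ[F] (vanishOn (σ := σ) A) where
  toFun g := ⟨g.comp A.mkQ, by intro a ha; simp [Submodule.Quotient.mk_eq_zero A |>.2 ha]⟩
  map_add' g h := rfl
  map_smul' c g := rfl
  invFun f := A.liftQ f.1 (by intro a ha; exact f.2 a ha)
  left_inv g := by
    apply LinearMap.ext
    intro x
    obtain ⟨v, rfl⟩ := Submodule.Quotient.mk_surjective A x
    simp [Submodule.liftQ_apply]
    rfl
  right_inv f := by
    apply Subtype.ext
    apply LinearMap.ext
    intro v
    simp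
    rfl

theorem finrank_vanishOn [FiniteDimensional F V] (A : Submodule F V) :
    finrank F (vanishOn (σ := σ) A) = finrank F V - finrank F A := by
  rw [← (vanishOnEquiv (σ := σ) A).finrank_eq, finrank_semilinearDual]
  have := A.finrank_quotient_add_finrank
  omega

theorem sesqPerp_eq_comap (B : V →ₗ[F] V →ₛₗ[σ] F) (A : Submodule F V) :
    sesqPerp B A = (vanishOn (σ := σ) A).comap B := rfl

theorem finrank_sesqPerp [FiniteDimensional F V] (B : V →ₗ[F] V →ₛₗ[σ] F)
    (hnd : sesqPerp B ⊤ = ⊥) (A : Submodule F V) :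
    finrank F (sesqPerp B A) = finrank F V - finrank F A := by
  have hinj : Function.Injective B := by
    rw [← LinearMap.ker_eq_bot, ← hnd]
    ext v
    simp only [LinearMap.mem_ker, mem_sesqPerp, Submodule.mem_top, true_implies]
    constructor
    · intro h a; rw [h]; rfl
    · intro h; ext a; exact h a
  let e : V ≃ₗ[F] (V →ₛₗ[σ] F) :=
    LinearMap.linearEquivOfInjective B hinj (finrank_semilinearDual (σ := σ)).symm
  have h1 : sesqPerp B A = (vanishOn (σ := σ) A).comap (e : V →ₗ[F] _) := by
    ext v
    simp only [Submodule.mem_comap, LinearEquiv.coe_coe]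
    have : e v = B v := rfl
    rw [this]
    exact Iff.rfl
  rw [h1, Submodule.comap_equiv_eq_map_symm, LinearEquiv.finrank_map_eq,
    finrank_vanishOn]

theorem sesqPerp_sup (B : V →ₗ[F] V →ₛₗ[σ] F) (A C : Submodule F V) :
    sesqPerp B (A ⊔ C) = sesqPerp B A ⊓ sesqPerp B C := by
  apply le_antisymm
  · intro v hv
    exact ⟨fun a ha => hv a (Submodule.mem_sup_left ha),
      fun c hc => hv c (Submodule.mem_sup_right hc)⟩
  · rintro v ⟨h1, h2⟩ a ha
    obtain ⟨x, hx, y, hy, rfl⟩ := Submodule.mem_sup.1 ha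
    rw [map_add, h1 x hx, h2 y hy, add_zero]

/-- If `F` is a flag with `F^⊥ = F` (i.e. `V_i^⊥ = V_{k-i}`) and `U` is
transversal to `F`, then `U^⊥` is transversal to `F`. -/
theorem perp_transversal_of_transversal {σ : F →+* F} [FiniteDimensional F V]
    (B : V →ₗ[F] V →ₛₗ[σ] F)
    (hrefl : ∀ x y : V, B x y = 0 → B y x = 0)
    (hnd : sesqPerp B ⊤ = ⊥)
    (k : ℕ) (Vflag : ℕ → Submodule F V)
    (hmono : Monotone Vflag) (h0 : Vflag 0 = ⊥) (htop : Vflag k = ⊤)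
    (hflagperp : ∀ i ≤ k, sesqPerp B (Vflag i) = Vflag (k - i))
    (U : Submodule F V)
    (hU : ∀ i ≤ k, U ⊓ Vflag i = ⊥ ∨ U ⊔ Vflag i = ⊤) :
    ∀ i ≤ k, sesqPerp B U ⊓ Vflag i = ⊥ ∨ sesqPerp B U ⊔ Vflag i = ⊤ := by
  intro i hi
  set j := k - i with hj
  have hjk : j ≤ k := Nat.sub_le _ _
  have hji : k - j = i := by omega
  have hVi : Vflag i = sesqPerp B (Vflag j) := by rw [hflagperp j hjk, hji]
  have hkey : sesqPerp B U ⊓ Vflag i = sesqPerp B (U ⊔ Vflag j) := by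
    rw [hVi, sesqPerp_sup]
  rcases hU j hjk with hinf | hsup
  · right
    set n := Module.finrank F V
    have hd1 : Module.finrank F (sesqPerp B U) = n - Module.finrank F U :=
      finrank_sesqPerp B hnd U
    have hd2 : Module.finrank F (Vflag i) = n - Module.finrank F (Vflag j) := by
      rw [hVi, finrank_sesqPerp B hnd]
    have hd3 : Module.finrank F ↥(sesqPerp B U ⊓ Vflag i)
        = n - Module.finrank F ↥(U ⊔ Vflag j) := by
      rw [hkey, finrank_sesqPerp B hnd]
    have hd4 : Module.finrank F ↥(U ⊔ Vflag j)
        = Module.finrank F U + Module.finrank F (Vflag j) := by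
      have := Submodule.finrank_sup_add_finrank_inf_eq U (Vflag j)
      rw [hinf] at this
      simpa using this
    have hle : Module.finrank F ↥(U ⊔ Vflag j) ≤ n := Submodule.finrank_le _
    have hleU : Module.finrank F U ≤ n := Submodule.finrank_le _
    have hleV : Module.finrank F (Vflag j) ≤ n := Submodule.finrank_le _
    have hsum := Submodule.finrank_sup_add_finrank_inf_eq (sesqPerp B U) (Vflag i)
    apply Submodule.eq_top_of_finrank_eq
    omega
  · left
    rw [hkey, hsup, hnd]
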